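/- Let N be Hurwitz, P ≻ 0, and suppose the block matrix [[NᵀP + PN, −P M D_a, C̄_aᵀ],[−(M D_a)ᵀP, −λI, 0],[C̄_a, 0, −λI]] is negative definite for some λ > 0. Then for every frequency μ ∈ ℝ, the matrix T(iμ) := −C̄_a (iμ I − N)⁻¹ M D_a satisfies σ_max(T(iμ)) < λ. -/

import Mathlib

open Matrix Complex

section helpers

lemma star_map_mulVec {m k : Type*} [Fintype k] (A : Matrix m k ℝ) (v : k → ℂ) :
    (A.map (Complex.ofReal ·)) *ᵥ (star v) = star ((A.map (Complex.ofReal ·)) *ᵥ v) := by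
  funext i
  simp only [mulVec, dotProduct, Pi.star_apply, Matrix.map_apply, Complex.star_def, map_sum,
    _root_.map_mul, Complex.conj_ofReal]

lemma sum_elim_add' {α β γ : Type*} [Add γ] (a c : α → γ) (b d : β → γ) :
    Sum.elim a b + Sum.elim c d = Sum.elim (a + c) (b + d) := by
  funext i; cases i <;> rfl

lemma star_sum_elim {α β γ : Type*} [Star γ] (a : α → γ) (b : β → γ) :
    star (Sum.elim a b) = Sum.elim (star a) (star b) := by
  funext i; cases i <;> rfl

lemma fromRows_map' {m₁ m₂ l : Type*} {α β : Type*} (f : α → β)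
    (A : Matrix m₁ l α) (B : Matrix m₂ l α) :
    (fromRows A B).map f = fromRows (A.map f) (B.map f) := by
  ext (i | i) j <;> rfl

lemma fromColumns_map' {m l₁ l₂ : Type*} {α β : Type*} (f : α → β)
    (A : Matrix m l₁ α) (B : Matrix m l₂ α) :
    (fromCols A B).map f = fromCols (A.map f) (B.map f) := by
  ext i (j | j) <;> rfl

lemma map_neg_smul_one {k : Type*} [Fintype k] [DecidableEq k] (c : ℝ) :
    (-(c • (1 : Matrix k k ℝ))).map (Complex.ofReal ·) = -((c : ℂ) • (1 : Matrix k k ℂ)) := by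
  ext i j
  by_cases h : i = j <;> simp [Matrix.map_apply, Matrix.one_apply, h]

lemma map_mul' {m k l : Type*} [Fintype k] (A : Matrix m k ℝ) (B : Matrix k l ℝ) :
    (A * B).map (Complex.ofReal ·) = A.map (Complex.ofReal ·) * B.map (Complex.ofReal ·) := by
  ext i j
  simp [Matrix.mul_apply, Matrix.map_apply]

lemma map_add' {m k : Type*} (A B : Matrix m k ℝ) :
    (A + B).map (Complex.ofReal ·) = A.map (Complex.ofReal ·) + B.map (Complex.ofReal ·) := by
  ext i j; simp

lemma map_neg' {m k : Type*} (A : Matrix m k ℝ) :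
    (-A).map (Complex.ofReal ·) = -(A.map (Complex.ofReal ·)) := by
  ext i j; simp

lemma map_transpose' {m k : Type*} (A : Matrix m k ℝ) :
    (Aᵀ).map (Complex.ofReal ·) = (A.map (Complex.ofReal ·))ᵀ := by
  ext i j; rfl

lemma negdef_complex {m : Type*} [Fintype m] [DecidableEq m] (A : Matrix m m ℝ)
    (hA : (-A).PosDef) (z : m → ℂ) (hz : z ≠ 0) :
    (star z ⬝ᵥ (A.map (Complex.ofReal ·) *ᵥ z)).re < 0 := by
  set a : m → ℝ := fun i => (z i).re with ha
  set b : m → ℝ := fun i => (z i).im with hb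
  have key : (star z ⬝ᵥ (A.map (Complex.ofReal ·) *ᵥ z)).re
      = a ⬝ᵥ (A *ᵥ a) + b ⬝ᵥ (A *ᵥ b) := by
    simp only [dotProduct, mulVec, Pi.star_apply, Matrix.map_apply]
    rw [Complex.re_sum, ← Finset.sum_add_distrib]
    refine Finset.sum_congr rfl fun i _ => ?_
    rw [show (∑ j, (A i j : ℂ) * z j) = ∑ j, ((A i j : ℂ) * z j) from rfl]
    rw [Finset.mul_sum, Complex.re_sum, Finset.mul_sum, Finset.mul_sum,
      ← Finset.sum_add_distrib]
    refine Finset.sum_congr rfl fun j _ => ?_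
    simp [Complex.mul_re, Complex.mul_im, ha, hb]
  rw [key]
  have neg : ∀ v : m → ℝ, v ⬝ᵥ (A *ᵥ v) ≤ 0 := by
    intro v
    by_cases hv : v = 0
    · simp [hv]
    · have := hA.dotProduct_mulVec_pos hv
      rw [neg_mulVec, dotProduct_neg, star_trivial] at this
      linarith
  have negs : ∀ v : m → ℝ, v ≠ 0 → v ⬝ᵥ (A *ᵥ v) < 0 := by
    intro v hv
    have := hA.dotProduct_mulVec_pos hv
    rw [neg_mulVec, dotProduct_neg, star_trivial] at this
    linarith
  have hab : a ≠ 0 ∨ b ≠ 0 := by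
    by_contra h
    push_neg at h
    apply hz
    funext i
    have h1 : a i = 0 := by rw [h.1]; rfl
    have h2 : b i = 0 := by rw [h.2]; rfl
    exact Complex.ext h1 h2
  rcases hab with h | h
  · have := negs a h; linarith [neg b]
  · have := negs b h; linarith [neg a]

lemma core_calc {n p q : ℕ}
    (N' P' : Matrix (Fin n) (Fin n) ℂ) (B' : Matrix (Fin n) (Fin p) ℂ)
    (C' : Matrix (Fin q) (Fin n) ℂ)
    (K lamC : ℂ) (hlamC : lamC ≠ 0) (hKstar : star K = -K) (hlamstar : star lamC = lamC)
    (x : Fin n → ℂ) (u : Fin p → ℂ)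
    (hx : N' *ᵥ x = K • x + B' *ᵥ u)
    (hstarN : N' *ᵥ star x = star (N' *ᵥ x))
    (hstarB : B' *ᵥ star u = star (B' *ᵥ u))
    (hstarC : C' *ᵥ star x = star (C' *ᵥ x))
    (hPt : P'ᵀ = P')
    (w : Fin q → ℂ) (hw : w = C' *ᵥ x)
    (y : Fin q → ℂ) (hy : y = lamC⁻¹ • w) :
    star x ⬝ᵥ ((N'ᵀ * P' + P' * N') *ᵥ x) + star x ⬝ᵥ ((-(P' * B')) *ᵥ u)
      + star x ⬝ᵥ (C'ᵀ *ᵥ y)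
      + (star u ⬝ᵥ ((-(P' * B'))ᵀ *ᵥ x) + star u ⬝ᵥ (-(lamC • u)))
      + (star y ⬝ᵥ (C' *ᵥ x) + star y ⬝ᵥ (-(lamC • y)))
      = -(lamC * (star u ⬝ᵥ u)) + lamC⁻¹ * (star w ⬝ᵥ w) := by
  have hstarlaminv : star lamC⁻¹ = lamC⁻¹ := by
    rw [show star lamC⁻¹ = (star lamC)⁻¹ from star_inv₀ lamC, hlamstar]
  have hT1 : star x ⬝ᵥ ((N'ᵀ * P' + P' * N') *ᵥ x)
      = star (B' *ᵥ u) ⬝ᵥ (P' *ᵥ x) + star x ⬝ᵥ (P' *ᵥ (B' *ᵥ u)) := by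
    rw [add_mulVec, dotProduct_add, ← mulVec_mulVec, ← mulVec_mulVec,
      dotProduct_mulVec (star x) N'ᵀ, vecMul_transpose, hstarN, hx]
    rw [star_add, star_smul, add_dotProduct, smul_dotProduct, hKstar,
      mulVec_add, mulVec_smul, dotProduct_add, dotProduct_smul]
    simp only [smul_eq_mul]
    ring
  have hT2 : star x ⬝ᵥ ((-(P' * B')) *ᵥ u) = -(star x ⬝ᵥ (P' *ᵥ (B' *ᵥ u))) := by
    rw [neg_mulVec, dotProduct_neg, ← mulVec_mulVec]
  have hT3 : star x ⬝ᵥ (C'ᵀ *ᵥ y) = lamC⁻¹ * (star w ⬝ᵥ w) := by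
    rw [dotProduct_mulVec, vecMul_transpose, hstarC, ← hw, hy, dotProduct_smul, smul_eq_mul]
  have hT4 : star u ⬝ᵥ ((-(P' * B'))ᵀ *ᵥ x) = -(star (B' *ᵥ u) ⬝ᵥ (P' *ᵥ x)) := by
    rw [transpose_neg, neg_mulVec, dotProduct_neg, transpose_mul, hPt, ← mulVec_mulVec,
      dotProduct_mulVec (star u) B'ᵀ, vecMul_transpose, hstarB]
  have hT5 : star u ⬝ᵥ (-(lamC • u)) = -(lamC * (star u ⬝ᵥ u)) := by
    rw [dotProduct_neg, dotProduct_smul, smul_eq_mul]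
  have hT6 : star y ⬝ᵥ (C' *ᵥ x) = lamC⁻¹ * (star w ⬝ᵥ w) := by
    rw [← hw, hy, star_smul, smul_dotProduct, hstarlaminv, smul_eq_mul]
  have hT7 : star y ⬝ᵥ (-(lamC • y)) = -(lamC * (lamC⁻¹ * (lamC⁻¹ * (star w ⬝ᵥ w)))) := by
    rw [dotProduct_neg, dotProduct_smul, hy, star_smul, smul_dotProduct, hstarlaminv,
      dotProduct_smul]
    simp only [smul_eq_mul]
  rw [hT1, hT2, hT3, hT4, hT5, hT6, hT7]
  field_simp
  ring

open Metric in
lemma clm_norm_lt {E F : Type*} [NormedAddCommGroup E] [NormedSpace ℂ E]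
    [NormedAddCommGroup F] [NormedSpace ℂ F] [ProperSpace E]
    (f : E →L[ℂ] F) {c : ℝ} (hc : 0 < c)
    (h : ∀ u : E, u ≠ 0 → ‖f u‖ < c * ‖u‖) : ‖f‖ < c := by
  obtain ⟨u₀, hu₀mem, hmax⟩ := (isCompact_closedBall (0 : E) 1).exists_isMaxOn
    ⟨0, mem_closedBall_self zero_le_one⟩
    (Continuous.continuousOn (by continuity : Continuous fun u : E => ‖f u‖))
  set K := ‖f u₀‖ with hK
  have hbound : ‖f‖ ≤ K := by
    refine f.opNorm_le_bound (norm_nonneg _) fun v => ?_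
    by_cases hv : v = 0
    · simp [hv]
    · have hnv : (0:ℝ) < ‖v‖ := norm_pos_iff.2 hv
      have hmem : ((‖v‖⁻¹ : ℝ) : ℂ) • v ∈ closedBall (0 : E) 1 := by
        simp [norm_smul, abs_of_pos (inv_pos.2 hnv), inv_mul_cancel₀ hnv.ne']
      have h2 : ‖f ((((‖v‖⁻¹ : ℝ)) : ℂ) • v)‖ ≤ K := hmax hmem
      rw [f.map_smul, norm_smul, Complex.norm_real, norm_inv, norm_norm] at h2
      calc ‖f v‖ = ‖v‖ * (‖v‖⁻¹ * ‖f v‖) := by field_simp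
        _ ≤ ‖v‖ * K := mul_le_mul_of_nonneg_left h2 hnv.le
        _ = K * ‖v‖ := mul_comm _ _
  have hKlt : K < c := by
    by_cases hu0 : u₀ = 0
    · simp [hK, hu0, hc]
    · have h1 := h u₀ hu0
      have h2 : ‖u₀‖ ≤ 1 := by simpa using hu₀mem
      have : c * ‖u₀‖ ≤ c * 1 := mul_le_mul_of_nonneg_left h2 hc.le
      simpa using lt_of_lt_of_le h1 (by simpa using this)
  exact lt_of_le_of_lt hbound hKlt

end helpers

/-- The spectral norm (largest singular value) of a complex matrix, as the Euclidean
operator norm. -/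
noncomputable def specNormC {a b : ℕ} (A : Matrix (Fin a) (Fin b) ℂ) : ℝ :=
  ‖(Matrix.toEuclideanLin A).toContinuousLinearMap‖

/-- Bounded-real lemma direction: if `N` is Hurwitz, `P ≻ 0`, and the block matrix
`[[NᵀP + PN, −P M D_a, C̄_aᵀ], [−(M D_a)ᵀ P, −λI, 0], [C̄_a, 0, −λI]]` is negative definite
for some `λ > 0`, then `σ_max(−C̄_a (iμ I − N)⁻¹ M D_a) < λ` for every frequency `μ ∈ ℝ`. -/
theorem bounded_real_lemma_hinf {n p q : ℕ}
    (N : Matrix (Fin n) (Fin n) ℝ)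
    (hHurwitz : ∀ μ : ℂ, μ ∈ spectrum ℂ (N.map (Complex.ofReal ·)) → μ.re < 0)
    (P : Matrix (Fin n) (Fin n) ℝ) (hP : P.PosDef)
    (MDa : Matrix (Fin n) (Fin p) ℝ) (Ca : Matrix (Fin q) (Fin n) ℝ)
    (lam : ℝ) (hlam : 0 < lam)
    (hLMI : (-(Matrix.fromBlocks
        (Matrix.fromBlocks (Nᵀ * P + P * N) (-(P * MDa)) (-(P * MDa))ᵀ
          (-(lam • (1 : Matrix (Fin p) (Fin p) ℝ))))
        (Matrix.fromRows Caᵀ 0)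
        (Matrix.fromCols Ca 0)
        (-(lam • (1 : Matrix (Fin q) (Fin q) ℝ))))).PosDef) :
    ∀ μ : ℝ,
      specNormC (-(Ca.map (Complex.ofReal ·)) *
          ((Complex.I * μ) • (1 : Matrix (Fin n) (Fin n) ℂ) - N.map (Complex.ofReal ·))⁻¹ *
          MDa.map (Complex.ofReal ·)) < lam := by
  intro μ
  classical
  set N' : Matrix (Fin n) (Fin n) ℂ := N.map (Complex.ofReal ·) with hN'
  set P' : Matrix (Fin n) (Fin n) ℂ := P.map (Complex.ofReal ·) with hP'
  set B' : Matrix (Fin n) (Fin p) ℂ := MDa.map (Complex.ofReal ·) with hB'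
  set C' : Matrix (Fin q) (Fin n) ℂ := Ca.map (Complex.ofReal ·) with hC'
  set K : ℂ := Complex.I * μ with hKdef
  set S : Matrix (Fin n) (Fin n) ℂ := K • 1 - N' with hSdef
  set lamC : ℂ := (lam : ℂ) with hlamC
  have hlamC0 : lamC ≠ 0 := by
    simp [hlamC, Complex.ofReal_ne_zero]
    exact hlam.ne'
  -- invertibility of S
  have hSu : IsUnit S.det := by
    have hmem : K ∉ spectrum ℂ N' := by
      intro hmem
      have := hHurwitz _ hmem
      simp [hKdef, Complex.mul_re] at this
    rw [spectrum.notMem_iff, Algebra.algebraMap_eq_smul_one] at hmem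
    exact (Matrix.isUnit_iff_isUnit_det _).mp hmem
  set T : Matrix (Fin q) (Fin p) ℂ := (-C') * S⁻¹ * B' with hTdef
  -- per-vector bound
  have main : ∀ u : Fin p → ℂ, u ≠ 0 →
      (∑ i, Complex.normSq ((T *ᵥ u) i)) < lam ^ 2 * ∑ i, Complex.normSq (u i) := by
    intro u hu
    set x : Fin n → ℂ := -(S⁻¹ *ᵥ (B' *ᵥ u)) with hxdef
    have hx : N' *ᵥ x = K • x + B' *ᵥ u := by
      have h1 : S *ᵥ x = -(B' *ᵥ u) := by
        rw [hxdef, mulVec_neg, mulVec_mulVec, mul_nonsing_inv _ hSu, one_mulVec]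
      rw [hSdef, sub_mulVec, smul_mulVec, one_mulVec, sub_eq_iff_eq_add] at h1
      rw [h1]; abel
    set w : Fin q → ℂ := C' *ᵥ x with hwdef
    have hTu : T *ᵥ u = w := by
      rw [hTdef, ← mulVec_mulVec, ← mulVec_mulVec, neg_mulVec, hwdef, hxdef, mulVec_neg]
    set y : Fin q → ℂ := lamC⁻¹ • w with hydef
    set z : (Fin n ⊕ Fin p) ⊕ Fin q → ℂ := Sum.elim (Sum.elim x u) y with hzdef
    have hz : z ≠ 0 := by
      intro h0
      apply hu
      funext i
      have := congrFun h0 (Sum.inl (Sum.inr i))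
      simpa [hzdef] using this
    have hQ := negdef_complex _ hLMI z hz
    -- rewrite the mapped block matrix
    have hLm : (Matrix.fromBlocks
        (Matrix.fromBlocks (Nᵀ * P + P * N) (-(P * MDa)) (-(P * MDa))ᵀ
          (-(lam • (1 : Matrix (Fin p) (Fin p) ℝ))))
        (Matrix.fromRows Caᵀ 0)
        (Matrix.fromCols Ca 0)
        (-(lam • (1 : Matrix (Fin q) (Fin q) ℝ)))).map (Complex.ofReal ·)
        = Matrix.fromBlocks
          (Matrix.fromBlocks (N'ᵀ * P' + P' * N') (-(P' * B')) (-(P' * B'))ᵀ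
            (-(lamC • (1 : Matrix (Fin p) (Fin p) ℂ))))
          (Matrix.fromRows C'ᵀ 0)
          (Matrix.fromCols C' 0)
          (-(lamC • (1 : Matrix (Fin q) (Fin q) ℂ))) := by
      rw [Matrix.fromBlocks_map, Matrix.fromBlocks_map, fromRows_map', fromColumns_map',
        map_add', map_mul', map_mul', map_neg', map_mul', map_transpose',
        map_neg_smul_one, map_neg_smul_one, map_transpose', map_neg', map_mul']
      rfl
    rw [hLm] at hQ
    -- expand the block quadratic form
    have hexp : star z ⬝ᵥ ((Matrix.fromBlocks
          (Matrix.fromBlocks (N'ᵀ * P' + P' * N') (-(P' * B')) (-(P' * B'))ᵀ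
            (-(lamC • (1 : Matrix (Fin p) (Fin p) ℂ))))
          (Matrix.fromRows C'ᵀ 0)
          (Matrix.fromCols C' 0)
          (-(lamC • (1 : Matrix (Fin q) (Fin q) ℂ)))) *ᵥ z)
        = star x ⬝ᵥ ((N'ᵀ * P' + P' * N') *ᵥ x) + star x ⬝ᵥ ((-(P' * B')) *ᵥ u)
          + star x ⬝ᵥ (C'ᵀ *ᵥ y)
          + (star u ⬝ᵥ ((-(P' * B'))ᵀ *ᵥ x) + star u ⬝ᵥ (-(lamC • u)))
          + (star y ⬝ᵥ (C' *ᵥ x) + star y ⬝ᵥ (-(lamC • y))) := by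
      have hBR : (-(lamC • (1 : Matrix (Fin q) (Fin q) ℂ))) *ᵥ y = -(lamC • y) := by
        rw [neg_mulVec, smul_mulVec, one_mulVec]
      have hA22 : (-(lamC • (1 : Matrix (Fin p) (Fin p) ℂ))) *ᵥ u = -(lamC • u) := by
        rw [neg_mulVec, smul_mulVec, one_mulVec]
      simp only [hzdef, star_sum_elim, fromBlocks_mulVec, Sum.elim_comp_inl, Sum.elim_comp_inr,
        fromRows_mulVec, fromCols_mulVec_sumElim, sum_elim_add', hBR, hA22,
        sumElim_dotProduct_sumElim, Matrix.zero_mulVec, dotProduct_add, dotProduct_zero,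
        add_zero, zero_add]
    rw [hexp] at hQ
    have hKstar : star K = -K := by
      simp [hKdef, Complex.ext_iff]
    have hlamstar : star lamC = lamC := by simp [hlamC]
    have hstarN : N' *ᵥ star x = star (N' *ᵥ x) := star_map_mulVec N x
    have hstarB : B' *ᵥ star u = star (B' *ᵥ u) := star_map_mulVec MDa u
    have hstarC : C' *ᵥ star x = star (C' *ᵥ x) := star_map_mulVec Ca x
    have hPt : P'ᵀ = P' := by
      have hPsymm : Pᵀ = P := by
        ext i j
        have := congrFun (congrFun hP.1 i) j
        simpa using this
      rw [hP', ← map_transpose', hPsymm]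
    have hcalc := core_calc N' P' B' C' K lamC hlamC0 hKstar hlamstar x u hx
      hstarN hstarB hstarC hPt w hwdef y hydef
    rw [hcalc] at hQ
    have hsuu : star u ⬝ᵥ u = ((∑ i, Complex.normSq (u i) : ℝ) : ℂ) := by
      rw [Complex.ofReal_sum]
      refine Finset.sum_congr rfl fun i _ => ?_
      simp [Pi.star_apply, Complex.star_def, mul_comm, Complex.mul_conj]
    have hsww : star w ⬝ᵥ w = ((∑ i, Complex.normSq (w i) : ℝ) : ℂ) := by
      rw [Complex.ofReal_sum]
      refine Finset.sum_congr rfl fun i _ => ?_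
      simp [Pi.star_apply, Complex.star_def, mul_comm, Complex.mul_conj]
    rw [hsuu, hsww, hlamC, ← Complex.ofReal_inv, ← Complex.ofReal_mul, ← Complex.ofReal_mul,
      ← Complex.ofReal_neg, ← Complex.ofReal_add, Complex.ofReal_re] at hQ
    -- hQ : -(lam * Eu) + lam⁻¹ * Ew < 0
    rw [hTu]
    have hinv : lam * lam⁻¹ = 1 := mul_inv_cancel₀ hlam.ne'
    have hwnn : (0:ℝ) ≤ ∑ i, Complex.normSq (w i) :=
      Finset.sum_nonneg fun i _ => Complex.normSq_nonneg (w i)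
    nlinarith [hQ, hinv, hlam, hwnn]
  -- from per-vector bound to operator norm
  show ‖(Matrix.toEuclideanLin T).toContinuousLinearMap‖ < lam
  apply clm_norm_lt _ hlam
  intro u hu
  have hu' : (fun i => u i) ≠ (0 : Fin p → ℂ) := by
    intro h0
    apply hu
    ext i
    exact congrFun h0 i
  have hmain := main (fun i => u i) hu'
  have hnorm1 : ‖(Matrix.toEuclideanLin T).toContinuousLinearMap u‖
      = Real.sqrt (∑ i, Complex.normSq ((T *ᵥ fun i => u i) i)) := by
    rw [EuclideanSpace.norm_eq]
    congr 1
    refine Finset.sum_congr rfl fun i _ => ?_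
    rw [show ((Matrix.toEuclideanLin T).toContinuousLinearMap u) i
        = (T *ᵥ fun j => u j) i from rfl, Complex.sq_norm]
  have hnorm2 : ‖u‖ = Real.sqrt (∑ i, Complex.normSq (u i)) := by
    rw [EuclideanSpace.norm_eq]
    congr 1
    refine Finset.sum_congr rfl fun i _ => ?_
    rw [Complex.sq_norm]
  rw [hnorm1, hnorm2]
  have hnn : (0:ℝ) ≤ ∑ i, Complex.normSq ((T *ᵥ fun i => u i) i) :=
    Finset.sum_nonneg fun i _ => Complex.normSq_nonneg _
  calc Real.sqrt (∑ i, Complex.normSq ((T *ᵥ fun i => u i) i))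
      < Real.sqrt (lam ^ 2 * ∑ i, Complex.normSq (u i)) := Real.sqrt_lt_sqrt hnn hmain
    _ = lam * Real.sqrt (∑ i, Complex.normSq (u i)) := by
        rw [Real.sqrt_mul (sq_nonneg lam), Real.sqrt_sq hlam.le]
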